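/- Let (Ω, μ) be a σ-finite measure space and T > 0. Let ψ ∈ L²(μ), let F : [0,T] × Ω → ℝ be measurable with F ∈ L²((0,T) × Ω) (product of Lebesgue measure and μ), and let n : [0,T] × Ω → ℝ be measurable and bounded such that for μ-a.e. x the map s ↦ n(s,x) is absolutely continuous with a.e. derivative ∂_s n(s,x), and ∂_s n is bounded on [0,T] × Ω. Then for every h > 0 and a.e. t with t + h ≤ T, (1/h)∫_Ω ∫_t^{t+h} n(s,x) F(s,x) ψ(x) ds dμ(x) = ∫_Ω n(t+h,x) F_h(t,x) ψ(x) dμ(x) + ∫_Ω ψ(x) [ ((n(t+h,x) − n(t,x))/h) ∫_0^t F(s,x) ds − (1/h)∫_t^{t+h} ∂_s n(s,x) (∫_0^s F(r,x) dr) ds ] dμ(x). -/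

import Mathlib

open MeasureTheory intervalIntegral
open Set

lemma steklov_oneD {f g N : ℝ → ℝ} {t h T : ℝ} (ht : 0 ≤ t) (hh : 0 < h) (hth : t + h ≤ T)
    (hfm : Measurable f) (hf : IntegrableOn f (Ioc 0 T))
    (hgm : Measurable g) {M : ℝ} (hgbd : ∀ s, |g s| ≤ M)
    (hN : ∀ a b : ℝ, 0 ≤ a → a ≤ b → b ≤ T → N b - N a = ∫ s in a..b, g s) :
    ∫ s in t..t + h, N s * f s
      = N (t + h) * (∫ s in t..t + h, f s)
        + (N (t + h) - N t) * (∫ s in (0:ℝ)..t, f s)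
        - ∫ s in t..t + h, g s * (∫ r in (0:ℝ)..s, f r) := by
  have hM0 : 0 ≤ M := (abs_nonneg (g 0)).trans (hgbd 0)
  have htt : t ≤ t + h := by linarith
  have htT : t ≤ T := le_trans htt hth
  have h0th : (0:ℝ) ≤ t + h := by linarith
  have finIoc : ∀ a b : ℝ, IsFiniteMeasure (volume.restrict (Ioc a b)) := fun a b =>
    ⟨by rw [Measure.restrict_apply_univ]; exact measure_Ioc_lt_top⟩
  haveI := finIoc t (t + h)
  haveI := finIoc 0 T
  have hIsub : Ioc t (t + h) ⊆ Ioc 0 T := Ioc_subset_Ioc ht hth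
  have hfI : IntegrableOn f (Ioc t (t + h)) := hf.mono_set hIsub
  have hf0t : IntervalIntegrable f volume 0 t :=
    (intervalIntegrable_iff_integrableOn_Ioc_of_le ht).2 (hf.mono_set (Ioc_subset_Ioc le_rfl htT))
  have hf0th : IntervalIntegrable f volume 0 (t + h) :=
    (intervalIntegrable_iff_integrableOn_Ioc_of_le h0th).2 (hf.mono_set (Ioc_subset_Ioc le_rfl hth))
  have hf0r : ∀ r ∈ Ioc t (t + h), IntervalIntegrable f volume 0 r := fun r hr =>
    (intervalIntegrable_iff_integrableOn_Ioc_of_le (ht.trans hr.1.le)).2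
      (hf.mono_set (Ioc_subset_Ioc le_rfl (hr.2.trans hth)))
  -- bound for the primitive of f
  have hGbd : ∀ r, 0 ≤ r → r ≤ T → |∫ u in (0:ℝ)..r, f u| ≤ ∫ u in Ioc 0 T, |f u| := by
    intro r h0 hrT
    rw [intervalIntegral.integral_of_le h0]
    calc |∫ u in Ioc 0 r, f u| ≤ ∫ u in Ioc 0 r, |f u| := by
          simpa [Real.norm_eq_abs] using
            norm_integral_le_integral_norm (μ := volume.restrict (Ioc 0 r)) f
      _ ≤ ∫ u in Ioc 0 T, |f u| :=
          setIntegral_mono_set hf.abs (Filter.Eventually.of_forall fun u => abs_nonneg _)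
            ((Ioc_subset_Ioc le_rfl hrT).eventuallyLE)
  -- continuous version of the primitive of f
  set f' : ℝ → ℝ := (Ioc 0 T).indicator f with hf'def
  have hf'int : Integrable f' := (integrable_indicator_iff measurableSet_Ioc).2 hf
  have hf'c : Continuous fun r => ∫ u in (0:ℝ)..r, f' u :=
    intervalIntegral.continuous_primitive (fun a b => hf'int.intervalIntegrable) 0
  have hG : ∀ r, 0 ≤ r → r ≤ T → (∫ u in (0:ℝ)..r, f u) = ∫ u in (0:ℝ)..r, f' u := by
    intro r h0 hrT
    rw [intervalIntegral.integral_of_le h0, intervalIntegral.integral_of_le h0]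
    refine (setIntegral_congr_fun measurableSet_Ioc fun u hu => ?_).symm
    exact Set.indicator_of_mem (Ioc_subset_Ioc le_rfl hrT hu) f
  -- g is integrable on intervals
  have hgOn : ∀ a b : ℝ, IntegrableOn g (Ioc a b) := by
    intro a b
    haveI := finIoc a b
    refine Integrable.mono' (integrable_const M) hgm.aestronglyMeasurable.restrict ?_
    exact Filter.Eventually.of_forall fun s => by simpa [Real.norm_eq_abs] using hgbd s
  have hgint : ∀ a b : ℝ, IntervalIntegrable g volume a b := by
    intro a b
    rcases le_total a b with hab | hab
    · exact (intervalIntegrable_iff_integrableOn_Ioc_of_le hab).2 (hgOn a b)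
    · exact ((intervalIntegrable_iff_integrableOn_Ioc_of_le hab).2 (hgOn b a)).symm
  have hgI : IntegrableOn g (Ioc t (t + h)) := hgOn t (t + h)
  have hJc : Continuous fun s => ∫ r in t..s, g r := intervalIntegral.continuous_primitive hgint t
  have hJbd : ∀ s ∈ Ioc t (t + h), |∫ r in t..s, g r| ≤ M * h := by
    intro s hs
    have h1 : |∫ r in t..s, g r| ≤ M * |s - t| := by
      simpa [Real.norm_eq_abs] using
        intervalIntegral.norm_integral_le_of_norm_le_const
          (C := M) (f := g) (a := t) (b := s)
          (fun x _ => by simpa [Real.norm_eq_abs] using hgbd x)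
    refine h1.trans ?_
    have : |s - t| ≤ h := by
      rw [abs_of_nonneg (by linarith [hs.1.le] : (0:ℝ) ≤ s - t)]
      linarith [hs.2]
    nlinarith
  -- Step A: pull out N t
  have hNs : ∀ s ∈ Ioc t (t + h), N s = N t + ∫ r in t..s, g r := by
    intro s hs
    have := hN t s ht hs.1.le (hs.2.trans hth)
    linarith
  have hfJint : IntegrableOn (fun s => f s * ∫ r in t..s, g r) (Ioc t (t + h)) := by
    refine Integrable.mono' (hfI.abs.mul_const (M * h))
      (hfm.aestronglyMeasurable.mul hJc.measurable.aestronglyMeasurable).restrict ?_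
    refine (ae_restrict_iff' measurableSet_Ioc).2 (Filter.Eventually.of_forall fun s hs => ?_)
    rw [Real.norm_eq_abs, abs_mul]
    exact mul_le_mul_of_nonneg_left (hJbd s hs) (abs_nonneg _)
  have hmain : ∫ s in Ioc t (t + h), N s * f s
      = N t * (∫ s in Ioc t (t + h), f s)
        + ∫ s in Ioc t (t + h), f s * ∫ r in t..s, g r := by
    rw [← MeasureTheory.integral_const_mul, ← integral_add (hfI.const_mul (N t)) hfJint]
    exact setIntegral_congr_fun measurableSet_Ioc fun s hs => by rw [hNs s hs]; ring
  -- the indicator form of the inner integral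
  have hJind : ∀ s ∈ Ioc t (t + h),
      (∫ r in t..s, g r) = ∫ r in Ioc t (t + h), (Ioc t s).indicator g r := by
    intro s hs
    rw [intervalIntegral.integral_of_le hs.1.le, setIntegral_indicator measurableSet_Ioc,
      Set.inter_eq_self_of_subset_right (Ioc_subset_Ioc le_rfl hs.2)]
  -- integrability on the product for Fubini
  have hS : MeasurableSet ({q : ℝ × ℝ | t < q.2} ∩ {q : ℝ × ℝ | q.2 ≤ q.1}) :=
    (measurableSet_lt measurable_const measurable_snd).inter
      (measurableSet_le measurable_snd measurable_fst)
  have huncurry_eq : (Function.uncurry fun s r => f s * (Ioc t s).indicator g r)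
      = fun q : ℝ × ℝ => f q.1 *
          (({q : ℝ × ℝ | t < q.2} ∩ {q : ℝ × ℝ | q.2 ≤ q.1}).indicator (fun q => g q.2) q) := by
    funext q
    simp [Function.uncurry, Set.indicator_apply, Set.mem_Ioc, Set.mem_setOf_eq]
  have hφmeas : Measurable (Function.uncurry fun s r => f s * (Ioc t s).indicator g r) := by
    rw [huncurry_eq]
    exact (hfm.comp measurable_fst).mul ((hgm.comp measurable_snd).indicator hS)
  have hφint : Integrable (Function.uncurry fun s r => f s * (Ioc t s).indicator g r)
      ((volume.restrict (Ioc t (t + h))).prod (volume.restrict (Ioc t (t + h)))) := by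
    refine Integrable.mono' (hfI.abs.mul_prod (integrable_const M))
      hφmeas.aestronglyMeasurable ?_
    refine Filter.Eventually.of_forall fun p => ?_
    have hind : |(Ioc t p.1).indicator g p.2| ≤ M := by
      rw [Set.indicator_apply]
      split_ifs
      · exact hgbd _
      · simpa using hM0
    calc ‖f p.1 * (Ioc t p.1).indicator g p.2‖ = |f p.1| * |(Ioc t p.1).indicator g p.2| := by
          rw [Real.norm_eq_abs, abs_mul]
      _ ≤ |f p.1| * M := mul_le_mul_of_nonneg_left hind (abs_nonneg _)
  have hswap := MeasureTheory.integral_integral_swap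
    (f := fun s r => f s * (Ioc t s).indicator g r) hφint
  -- inner integral computation after the swap
  have hinner : ∀ r ∈ Ioc t (t + h),
      (∫ s in Ioc t (t + h), f s * (Ioc t s).indicator g r)
        = g r * ((∫ u in (0:ℝ)..(t + h), f u) - ∫ u in (0:ℝ)..r, f u) := by
    intro r hr
    have h1 : ∀ s, f s * (Ioc t s).indicator g r
        = (Ici r).indicator (fun s' => f s' * g r) s := by
      intro s
      simp only [Set.indicator_apply, Set.mem_Ioc, Set.mem_Ici]
      by_cases hrs : r ≤ s
      · simp [hrs, hr.1]
      · simp [hrs]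
    have hIcap : Ioc t (t + h) ∩ Ici r = Icc r (t + h) := by
      ext z
      simp only [Set.mem_inter_iff, Set.mem_Ioc, Set.mem_Ici, Set.mem_Icc]
      constructor
      · rintro ⟨⟨_, h2⟩, h3⟩; exact ⟨h3, h2⟩
      · rintro ⟨h1', h2⟩; exact ⟨⟨lt_of_lt_of_le hr.1 h1', h2⟩, h1'⟩
    calc (∫ s in Ioc t (t + h), f s * (Ioc t s).indicator g r)
        = ∫ s in Ioc t (t + h), (Ici r).indicator (fun s' => f s' * g r) s :=
          integral_congr_ae (Filter.Eventually.of_forall fun s => h1 s)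
      _ = ∫ s in Ioc t (t + h) ∩ Ici r, f s * g r := setIntegral_indicator measurableSet_Ici
      _ = ∫ s in Icc r (t + h), f s * g r := by rw [hIcap]
      _ = ∫ s in Ioc r (t + h), f s * g r := integral_Icc_eq_integral_Ioc
      _ = (∫ s in Ioc r (t + h), f s) * g r := integral_mul_const _ _
      _ = g r * ((∫ u in (0:ℝ)..(t + h), f u) - ∫ u in (0:ℝ)..r, f u) := by
          rw [← intervalIntegral.integral_of_le hr.2,
            intervalIntegral.integral_interval_sub_left hf0th (hf0r r hr), mul_comm]
  -- integrability of g * primitive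
  have hgG'int : IntegrableOn (fun r => g r * ∫ u in (0:ℝ)..r, f' u) (Ioc t (t + h)) := by
    refine Integrable.mono' (integrable_const (M * (∫ u in Ioc 0 T, |f u|)))
      (hgm.aestronglyMeasurable.mul hf'c.measurable.aestronglyMeasurable).restrict ?_
    refine (ae_restrict_iff' measurableSet_Ioc).2 (Filter.Eventually.of_forall fun r hr => ?_)
    have h0r : (0:ℝ) ≤ r := ht.trans hr.1.le
    have hrT : r ≤ T := hr.2.trans hth
    rw [Real.norm_eq_abs, abs_mul, ← hG r h0r hrT]
    exact mul_le_mul (hgbd r) (hGbd r h0r hrT) (abs_nonneg _) hM0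
  have hgGint : IntegrableOn (fun r => g r * ∫ u in (0:ℝ)..r, f u) (Ioc t (t + h)) := by
    refine hgG'int.congr ?_
    refine (ae_restrict_iff' measurableSet_Ioc).2 (Filter.Eventually.of_forall fun r hr => ?_)
    show g r * ∫ u in (0:ℝ)..r, f' u = g r * ∫ u in (0:ℝ)..r, f u
    rw [hG r (ht.trans hr.1.le) (hr.2.trans hth)]
  have hΔ : (∫ r in Ioc t (t + h), g r) = N (t + h) - N t := by
    rw [← intervalIntegral.integral_of_le htt]
    exact (hN t (t + h) ht htt hth).symm
  -- the Fubini identity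
  have hX : (∫ s in Ioc t (t + h), f s * ∫ r in t..s, g r)
      = (∫ u in (0:ℝ)..(t + h), f u) * (N (t + h) - N t)
        - ∫ r in Ioc t (t + h), g r * ∫ u in (0:ℝ)..r, f u := by
    calc (∫ s in Ioc t (t + h), f s * ∫ r in t..s, g r)
        = ∫ s in Ioc t (t + h), ∫ r in Ioc t (t + h), f s * (Ioc t s).indicator g r :=
          setIntegral_congr_fun measurableSet_Ioc fun s hs => by
            rw [hJind s hs, MeasureTheory.integral_const_mul]
      _ = ∫ r in Ioc t (t + h), ∫ s in Ioc t (t + h), f s * (Ioc t s).indicator g r := hswap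
      _ = ∫ r in Ioc t (t + h),
            g r * ((∫ u in (0:ℝ)..(t + h), f u) - ∫ u in (0:ℝ)..r, f u) :=
          setIntegral_congr_fun measurableSet_Ioc hinner
      _ = ∫ r in Ioc t (t + h),
            ((∫ u in (0:ℝ)..(t + h), f u) * g r - g r * ∫ u in (0:ℝ)..r, f u) :=
          integral_congr_ae (Filter.Eventually.of_forall fun r => by ring)
      _ = (∫ u in (0:ℝ)..(t + h), f u) * (N (t + h) - N t)
          - ∫ r in Ioc t (t + h), g r * ∫ u in (0:ℝ)..r, f u := by
          rw [integral_sub (hgI.const_mul _) hgGint, MeasureTheory.integral_const_mul, hΔ]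
  have hIf : (∫ s in Ioc t (t + h), f s)
      = (∫ u in (0:ℝ)..(t + h), f u) - ∫ u in (0:ℝ)..t, f u := by
    rw [intervalIntegral.integral_interval_sub_left hf0th hf0t]
    exact (intervalIntegral.integral_of_le htt).symm
  simp only [intervalIntegral.integral_of_le htt]
  rw [hmain, hX, hIf]
  ring

/-- Componentwise (scalar-coefficient) form of Corollary 4.2 of the paper: the Steklov
average of `s ↦ n(s,x) F(s,x)` against `ψ` equals the average coefficient term plus the
commutator correction, for a.e. `t` with `0 ≤ t` and `t + h ≤ T`. -/
theorem steklov_ibp_measure (Ω : Type*) [MeasurableSpace Ω] (μ : Measure Ω) [SigmaFinite μ]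
    (T : ℝ) (hT : 0 < T)
    (ψ : Ω → ℝ) (hψ : MemLp ψ 2 μ)
    (F : ℝ → Ω → ℝ) (hFmeas : Measurable (Function.uncurry F))
    (hF : MemLp (fun p : ℝ × Ω => F p.1 p.2) 2 ((volume.restrict (Set.Ioc 0 T)).prod μ))
    (n n' : ℝ → Ω → ℝ)
    (hnmeas : Measurable (Function.uncurry n))
    (hn'meas : Measurable (Function.uncurry n'))
    (M : ℝ) (hnbd : ∀ s x, |n s x| ≤ M) (hn'bd : ∀ s x, |n' s x| ≤ M)
    (hFTC : ∀ᵐ x ∂μ, ∀ a b : ℝ, 0 ≤ a → a ≤ b → b ≤ T →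
      n b x - n a x = ∫ s in a..b, n' s x)
    (h : ℝ) (hh : 0 < h) :
    ∀ᵐ t : ℝ, 0 ≤ t → t + h ≤ T →
      (1 / h) * ∫ x, (∫ s in t..(t + h), n s x * F s x * ψ x) ∂μ
        = (∫ x, n (t + h) x * ((1 / h) * ∫ s in t..(t + h), F s x) * ψ x ∂μ)
          + ∫ x, ψ x * (((n (t + h) x - n t x) / h) * (∫ s in (0 : ℝ)..t, F s x)
              - (1 / h) * ∫ s in t..(t + h), n' s x * (∫ r in (0 : ℝ)..s, F r x)) ∂μ := by
  set M' : ℝ := max M 0 with hM'def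
  have hM'0 : 0 ≤ M' := le_max_right _ _
  have hnbd' : ∀ s x, |n s x| ≤ M' := fun s x => (hnbd s x).trans (le_max_left _ _)
  have hn'bd' : ∀ s x, |n' s x| ≤ M' := fun s x => (hn'bd s x).trans (le_max_left _ _)
  have finIoc : ∀ a b : ℝ, IsFiniteMeasure (volume.restrict (Ioc a b)) := fun a b =>
    ⟨by rw [Measure.restrict_apply_univ]; exact measure_Ioc_lt_top⟩
  haveI := finIoc 0 T
  have hhalf : (1 : ENNReal) / 1 = 1 / 2 + 1 / 2 := by
    rw [ENNReal.add_halves]; norm_num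
  -- the product F ψ is integrable on the product measure
  have hψρ : MemLp (fun p : ℝ × Ω => ψ p.2) 2 ((volume.restrict (Set.Ioc 0 T)).prod μ) := by
    have h1 : MemLp ψ 2
        (Measure.map Prod.snd ((volume.restrict (Set.Ioc 0 T)).prod μ)) := by
      rw [Measure.map_snd_prod]
      exact hψ.smul_measure (measure_ne_top _ _)
    exact h1.comp_of_map measurable_snd.aemeasurable
  have hFψ : Integrable (fun p : ℝ × Ω => F p.1 p.2 * ψ p.2)
      ((volume.restrict (Set.Ioc 0 T)).prod μ) := by
    have h2 : MemLp ((fun p : ℝ × Ω => ψ p.2) • (fun p : ℝ × Ω => F p.1 p.2)) 1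
        ((volume.restrict (Set.Ioc 0 T)).prod μ) := hF.smul hψρ
    refine (memLp_one_iff_integrable.mp h2).congr ?_
    exact Filter.Eventually.of_forall fun p => by simp [mul_comm]
  have hFsq : Integrable (fun p : ℝ × Ω => F p.1 p.2 * F p.1 p.2)
      ((volume.restrict (Set.Ioc 0 T)).prod μ) := by
    have h2 : MemLp ((fun p : ℝ × Ω => F p.1 p.2) • (fun p : ℝ × Ω => F p.1 p.2)) 1
        ((volume.restrict (Set.Ioc 0 T)).prod μ) := hF.smul hF
    exact (memLp_one_iff_integrable.mp h2).congr
      (Filter.Eventually.of_forall fun p => by simp)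
  have hPψint : Integrable (fun x => ∫ s in Set.Ioc 0 T, ‖F s x * ψ x‖) μ :=
    hFψ.integral_norm_prod_right
  -- a.e. section integrability
  have hsec : ∀ᵐ x ∂μ, IntegrableOn (fun s => F s x) (Set.Ioc 0 T) volume := by
    filter_upwards [hFsq.prod_left_ae] with x hx
    refine Integrable.mono' ((integrable_const (1:ℝ)).add hx)
      ((hFmeas.comp (measurable_id.prodMk measurable_const)).aestronglyMeasurable) ?_
    refine Filter.Eventually.of_forall fun s => ?_
    simp only [Pi.add_apply]
    rw [Real.norm_eq_abs]
    nlinarith [sq_nonneg (|F s x| - 1), sq_abs (F s x), abs_nonneg (F s x)]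
  -- the unconditional factorization of the dominating function
  have hPψeq : ∀ x, (∫ s in Set.Ioc 0 T, ‖F s x * ψ x‖)
      = (∫ s in Set.Ioc 0 T, |F s x|) * |ψ x| := by
    intro x
    rw [← MeasureTheory.integral_mul_const]
    exact integral_congr_ae (Filter.Eventually.of_forall fun s => by
      simp [Real.norm_eq_abs, abs_mul])
  refine Filter.Eventually.of_forall fun t ht0 htT => ?_
  have htt : t ≤ t + h := by linarith
  have h0th : (0:ℝ) ≤ t + h := by linarith
  haveI := finIoc t (t + h)
  haveI := finIoc 0 t
  -- the three coefficient functions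
  set A : Ω → ℝ := fun x => n (t + h) x * (∫ s in t..(t + h), F s x) with hAdef
  set B : Ω → ℝ := fun x => (n (t + h) x - n t x) * (∫ s in (0:ℝ)..t, F s x) with hBdef
  set C : Ω → ℝ := fun x => ∫ s in t..(t + h), n' s x * (∫ r in (0:ℝ)..s, F r x) with hCdef
  -- measurability of the pieces
  have hnth : Measurable fun x => n (t + h) x :=
    hnmeas.comp (measurable_const.prodMk measurable_id)
  have hnt : Measurable fun x => n t x :=
    hnmeas.comp (measurable_const.prodMk measurable_id)
  have hsm1 : AEStronglyMeasurable (fun x => ∫ s in t..(t + h), F s x) μ := by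
    have e : (fun x => ∫ s in t..(t + h), F s x)
        = fun x => ∫ s in Set.Ioc t (t + h), F s x :=
      funext fun x => intervalIntegral.integral_of_le htt
    rw [e]
    exact (hFmeas.stronglyMeasurable.integral_prod_left).aestronglyMeasurable
  have hsm0 : AEStronglyMeasurable (fun x => ∫ s in (0:ℝ)..t, F s x) μ := by
    have e : (fun x => ∫ s in (0:ℝ)..t, F s x)
        = fun x => ∫ s in Set.Ioc 0 t, F s x :=
      funext fun x => intervalIntegral.integral_of_le ht0
    rw [e]
    exact (hFmeas.stronglyMeasurable.integral_prod_left).aestronglyMeasurable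
  -- the joint primitive
  set G2 : ℝ × Ω → ℝ :=
    fun q => ∫ r in Set.Ioc 0 T, (Set.Ioc 0 q.1).indicator (fun r => F r q.2) r with hG2def
  have hG2sm : StronglyMeasurable G2 := by
    apply MeasureTheory.StronglyMeasurable.integral_prod_right
      (f := fun (q : ℝ × Ω) (r : ℝ) => (Set.Ioc 0 q.1).indicator (fun r => F r q.2) r)
    have e : (Function.uncurry fun (q : ℝ × Ω) (r : ℝ) =>
        (Set.Ioc 0 q.1).indicator (fun r => F r q.2) r)
        = fun p : (ℝ × Ω) × ℝ =>
            ({p : (ℝ × Ω) × ℝ | 0 < p.2} ∩ {p : (ℝ × Ω) × ℝ | p.2 ≤ p.1.1}).indicator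
              (fun p => F p.2 p.1.2) p := by
      funext p
      simp [Function.uncurry, Set.indicator_apply, Set.mem_Ioc]
    rw [e]
    refine StronglyMeasurable.indicator ?_ ?_
    · exact (hFmeas.comp (measurable_snd.prodMk
        (measurable_snd.comp measurable_fst))).stronglyMeasurable
    · exact (measurableSet_lt measurable_const measurable_snd).inter
        (measurableSet_le measurable_snd (measurable_fst.comp measurable_fst))
  have hG2eq : ∀ (s : ℝ) (x : Ω), 0 ≤ s → s ≤ T →
      (∫ r in (0:ℝ)..s, F r x) = G2 (s, x) := by
    intro s x h0s hsT
    rw [intervalIntegral.integral_of_le h0s]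
    show _ = ∫ r in Set.Ioc 0 T, (Set.Ioc 0 s).indicator (fun r => F r x) r
    rw [setIntegral_indicator measurableSet_Ioc,
      Set.inter_eq_self_of_subset_right (Ioc_subset_Ioc le_rfl hsT)]
  have hCm : AEStronglyMeasurable C μ := by
    have hCrw : C = fun x => ∫ s in Set.Ioc t (t + h), n' s x * G2 (s, x) := by
      funext x
      show (∫ s in t..(t + h), n' s x * (∫ r in (0:ℝ)..s, F r x)) = _
      rw [intervalIntegral.integral_of_le htt]
      refine setIntegral_congr_fun measurableSet_Ioc fun s hs => ?_
      show n' s x * (∫ r in (0:ℝ)..s, F r x) = n' s x * G2 (s, x)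
      rw [hG2eq s x (ht0.trans hs.1.le) (hs.2.trans htT)]
    rw [hCrw]
    refine (MeasureTheory.StronglyMeasurable.integral_prod_left
      (f := fun (s : ℝ) (x : Ω) => n' s x * G2 (s, x)) ?_).aestronglyMeasurable
    exact hn'meas.stronglyMeasurable.mul hG2sm
  -- bounds for interval integrals of F against the dominating function
  have hFbd : ∀ᵐ x ∂μ, ∀ a b : ℝ, 0 ≤ a → a ≤ b → b ≤ T →
      |∫ s in a..b, F s x| ≤ ∫ s in Set.Ioc 0 T, |F s x| := by
    filter_upwards [hsec] with x hx
    intro a b ha hab hbT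
    rw [intervalIntegral.integral_of_le hab]
    calc |∫ s in Ioc a b, F s x| ≤ ∫ s in Ioc a b, |F s x| := by
          simpa [Real.norm_eq_abs] using
            norm_integral_le_integral_norm (μ := volume.restrict (Ioc a b)) (fun s => F s x)
      _ ≤ ∫ s in Set.Ioc 0 T, |F s x| :=
          setIntegral_mono_set hx.abs (Filter.Eventually.of_forall fun u => abs_nonneg _)
            ((Ioc_subset_Ioc ha hbT).eventuallyLE)
  -- integrability of the three products with ψ
  have hA : Integrable (fun x => ψ x * A x) μ := by
    refine Integrable.mono' (hPψint.const_mul M')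
      (hψ.1.mul ((hnth.aestronglyMeasurable).mul hsm1)) ?_
    filter_upwards [hFbd] with x hx
    rw [Real.norm_eq_abs, hPψeq x, hAdef]
    have h1 : |∫ s in t..(t + h), F s x| ≤ ∫ s in Set.Ioc 0 T, |F s x| := hx t (t + h) ht0 htt htT
    have h2 : (0:ℝ) ≤ ∫ s in Set.Ioc 0 T, |F s x| :=
      integral_nonneg fun s => abs_nonneg _
    calc |ψ x * (n (t + h) x * ∫ s in t..(t + h), F s x)|
        = |ψ x| * (|n (t + h) x| * |∫ s in t..(t + h), F s x|) := by
          rw [abs_mul, abs_mul]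
      _ ≤ |ψ x| * (M' * (∫ s in Set.Ioc 0 T, |F s x|)) := by
          refine mul_le_mul_of_nonneg_left ?_ (abs_nonneg _)
          exact mul_le_mul (hnbd' _ _) h1 (abs_nonneg _) hM'0
      _ = M' * ((∫ s in Set.Ioc 0 T, |F s x|) * |ψ x|) := by ring
  have hB : Integrable (fun x => ψ x * B x) μ := by
    refine Integrable.mono' (hPψint.const_mul (2 * M'))
      (hψ.1.mul (((hnth.sub hnt).aestronglyMeasurable).mul hsm0)) ?_
    filter_upwards [hFbd] with x hx
    rw [Real.norm_eq_abs, hPψeq x, hBdef]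
    have h1 : |∫ s in (0:ℝ)..t, F s x| ≤ ∫ s in Set.Ioc 0 T, |F s x| :=
      hx 0 t le_rfl ht0 (by linarith)
    have h3 : |n (t + h) x - n t x| ≤ 2 * M' :=
      (abs_sub _ _).trans (by linarith [hnbd' (t + h) x, hnbd' t x])
    calc |ψ x * ((n (t + h) x - n t x) * ∫ s in (0:ℝ)..t, F s x)|
        = |ψ x| * (|n (t + h) x - n t x| * |∫ s in (0:ℝ)..t, F s x|) := by
          rw [abs_mul, abs_mul]
      _ ≤ |ψ x| * ((2 * M') * (∫ s in Set.Ioc 0 T, |F s x|)) := by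
          refine mul_le_mul_of_nonneg_left ?_ (abs_nonneg _)
          exact mul_le_mul h3 h1 (abs_nonneg _) (by linarith)
      _ = (2 * M') * ((∫ s in Set.Ioc 0 T, |F s x|) * |ψ x|) := by ring
  have hC : Integrable (fun x => ψ x * C x) μ := by
    refine Integrable.mono' (hPψint.const_mul (M' * h)) (hψ.1.mul hCm) ?_
    filter_upwards [hFbd] with x hx
    rw [Real.norm_eq_abs, hPψeq x, hCdef]
    have h2 : (0:ℝ) ≤ ∫ s in Set.Ioc 0 T, |F s x| :=
      integral_nonneg fun s => abs_nonneg _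
    have hbdd : ∀ s ∈ Set.uIoc t (t + h),
        ‖n' s x * (∫ r in (0:ℝ)..s, F r x)‖ ≤ M' * (∫ s in Set.Ioc 0 T, |F s x|) := by
      intro s hs
      rw [Set.uIoc_of_le htt] at hs
      rw [Real.norm_eq_abs, abs_mul]
      exact mul_le_mul (hn'bd' _ _)
        (hx 0 s le_rfl (ht0.trans hs.1.le) (hs.2.trans htT)) (abs_nonneg _) hM'0
    have h1 : |∫ s in t..(t + h), n' s x * (∫ r in (0:ℝ)..s, F r x)|
        ≤ (M' * (∫ s in Set.Ioc 0 T, |F s x|)) * |t + h - t| := by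
      simpa [Real.norm_eq_abs] using
        intervalIntegral.norm_integral_le_of_norm_le_const hbdd
    have h4 : |t + h - t| = h := by rw [add_sub_cancel_left, abs_of_pos hh]
    rw [h4] at h1
    calc |ψ x * ∫ s in t..(t + h), n' s x * (∫ r in (0:ℝ)..s, F r x)|
        = |ψ x| * |∫ s in t..(t + h), n' s x * (∫ r in (0:ℝ)..s, F r x)| := abs_mul _ _
      _ ≤ |ψ x| * ((M' * (∫ s in Set.Ioc 0 T, |F s x|)) * h) :=
          mul_le_mul_of_nonneg_left h1 (abs_nonneg _)
      _ = (M' * h) * ((∫ s in Set.Ioc 0 T, |F s x|) * |ψ x|) := by ring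
  -- a.e. pointwise integration by parts
  have hae : ∀ᵐ x ∂μ, (∫ s in t..(t + h), n s x * F s x * ψ x) = ψ x * (A x + B x - C x) := by
    filter_upwards [hsec, hFTC] with x hx hNx
    have h1 : (∫ s in t..(t + h), n s x * F s x * ψ x)
        = (∫ s in t..(t + h), n s x * F s x) * ψ x := intervalIntegral.integral_mul_const _ _
    have hFx : Measurable fun s => F s x :=
      hFmeas.comp (measurable_id.prodMk measurable_const)
    have hn'x : Measurable fun s => n' s x :=
      hn'meas.comp (measurable_id.prodMk measurable_const)
    rw [h1, steklov_oneD ht0 hh htT hFx hx hn'x (fun s => hn'bd' s x) hNx]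
    simp only [hAdef, hBdef, hCdef]
    ring
  -- splitting the integral
  have hsplit : ∫ x, ψ x * (A x + B x - C x) ∂μ
      = (∫ x, ψ x * A x ∂μ) + (∫ x, ψ x * B x ∂μ) - ∫ x, ψ x * C x ∂μ := by
    have e : (fun x => ψ x * (A x + B x - C x))
        = fun x => (ψ x * A x + ψ x * B x) - ψ x * C x := funext fun x => by ring
    have hAB : Integrable (fun x => ψ x * A x + ψ x * B x) μ := by exact hA.add hB
    rw [e, integral_sub hAB hC, integral_add hA hB]
  -- rewriting the two sides
  have e1 : (∫ x, n (t + h) x * ((1 / h) * ∫ s in t..(t + h), F s x) * ψ x ∂μ)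
      = (1 / h) * ∫ x, ψ x * A x ∂μ := by
    rw [← MeasureTheory.integral_const_mul]
    exact integral_congr_ae (Filter.Eventually.of_forall fun x => by rw [hAdef]; ring)
  have e2 : (∫ x, ψ x * (((n (t + h) x - n t x) / h) * (∫ s in (0 : ℝ)..t, F s x)
      - (1 / h) * ∫ s in t..(t + h), n' s x * (∫ r in (0 : ℝ)..s, F r x)) ∂μ)
      = (1 / h) * ((∫ x, ψ x * B x ∂μ) - ∫ x, ψ x * C x ∂μ) := by
    rw [← integral_sub hB hC, ← MeasureTheory.integral_const_mul]
    exact integral_congr_ae (Filter.Eventually.of_forall fun x => by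
      rw [hBdef, hCdef]; ring)
  rw [integral_congr_ae hae, hsplit, e1, e2]
  ring
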